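/- arXiv:2603.23921 — 4 statements merged into one kernel-verified Lean document; each statement's English description precedes it below -/
import Mathlib

section
/- (Subsolution conditions: existence of parameters.) Let p : ℝ → ℝ be continuously differentiable on (0,∞) with p(ρ) > 0 and p'(ρ) > 0 for all ρ > 0, let P(ρ) = ρ ∫_{ρ*}^{ρ} p(r)/r² dr for some fixed ρ* > 0, and let ρ₀ > 0 and u₀ ≠ 0. Then there exist real numbers a, b with 0 < a < b, ρ₁ > 0 with ρ₂ := ρ₁ − (b/a)(ρ₁ − ρ₀) > 0, and m₁₁, q₁, q₂ ∈ ℝ such that the following hold: (E) b(q₁ + P(ρ₁) − p(ρ₁) − ½ρ₀u₀² − P(ρ₀)) ≤ a(q₁ + P(ρ₁) − p(ρ₁) − q₂ − P(ρ₂) + p(ρ₂)); (T1) (m₁₁² + b²(ρ₁ − ρ₀)²)/ρ₁ + 2(p(ρ₁) − q₁) < 0; (D1) (m₁₁²/ρ₁ + b²(ρ₁ − ρ₀) + p(ρ₀) + p(ρ₁) − 2q₁) · (b²(ρ₁ − ρ₀)²/ρ₁ − b²(ρ₁ − ρ₀) − p(ρ₀) + p(ρ₁)) > (−b(ρ₁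 − ρ₀)m₁₁/ρ₁ + b(ρ₀u₀ + m₁₁))²; (T2) p(ρ₂) − q₂ < 0; (D2) (b(b − a)(ρ₁ − ρ₀) + p(ρ₀) + p(ρ₂) − 2q₂) · (−b(b − a)(ρ₁ − ρ₀) − p(ρ₀) + p(ρ₂)) > ((b − a)m₁₁ + bρ₀u₀)². -/
open Set


set_option maxHeartbeats 4000000 in
/-- **Subsolution conditions: existence of parameters** (Lemma 3.5).
For any strictly increasing, positive `C¹` pressure law on `(0,∞)`, any `ρ₀ > 0` and `u₀ ≠ 0`,
there exist parameters `0 < a < b`, `ρ₁ > 0` with `ρ₂ := ρ₁ - (b/a)(ρ₁ - ρ₀) > 0`,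
and `m₁₁, q₁, q₂ ∈ ℝ` satisfying the reduced entropy condition (E) and the
subsolution conditions (T1), (D1), (T2), (D2).
Here `P(ρ) = ρ ∫_{ρ*}^ρ p(r)/r² dr`. -/
theorem subsolution_parameters_exist
    (p : ℝ → ℝ) (hp : ContDiffOn ℝ 1 p (Set.Ioi 0))
    (hppos : ∀ ρ : ℝ, 0 < ρ → 0 < p ρ) (hp' : ∀ ρ : ℝ, 0 < ρ → 0 < deriv p ρ)
    (ρstar : ℝ) (hρstar : 0 < ρstar)
    (P : ℝ → ℝ) (hP : ∀ ρ : ℝ, P ρ = ρ * ∫ r in ρstar..ρ, p r / r ^ 2)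
    (ρ₀ u₀ : ℝ) (hρ₀ : 0 < ρ₀) (hu₀ : u₀ ≠ 0) :
    ∃ a b ρ₁ m₁₁ q₁ q₂ : ℝ,
      0 < a ∧ a < b ∧ 0 < ρ₁ ∧
      0 < ρ₁ - (b / a) * (ρ₁ - ρ₀) ∧
      -- (E) reduced entropy condition
      (b * (q₁ + P ρ₁ - p ρ₁ - ρ₀ * u₀ ^ 2 / 2 - P ρ₀)
        ≤ a * (q₁ + P ρ₁ - p ρ₁ - q₂ - P (ρ₁ - (b / a) * (ρ₁ - ρ₀))
            + p (ρ₁ - (b / a) * (ρ₁ - ρ₀)))) ∧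
      -- (T1)
      ((m₁₁ ^ 2 + b ^ 2 * (ρ₁ - ρ₀) ^ 2) / ρ₁ + 2 * (p ρ₁ - q₁) < 0) ∧
      -- (D1)
      ((m₁₁ ^ 2 / ρ₁ + b ^ 2 * (ρ₁ - ρ₀) + p ρ₀ + p ρ₁ - 2 * q₁)
          * (b ^ 2 * (ρ₁ - ρ₀) ^ 2 / ρ₁ - b ^ 2 * (ρ₁ - ρ₀) - p ρ₀ + p ρ₁)
        > (-(b * (ρ₁ - ρ₀) * m₁₁) / ρ₁ + b * (ρ₀ * u₀ + m₁₁)) ^ 2) ∧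
      -- (T2)
      (p (ρ₁ - (b / a) * (ρ₁ - ρ₀)) - q₂ < 0) ∧
      -- (D2)
      ((b * (b - a) * (ρ₁ - ρ₀) + p ρ₀ + p (ρ₁ - (b / a) * (ρ₁ - ρ₀)) - 2 * q₂)
          * (-(b * (b - a) * (ρ₁ - ρ₀)) - p ρ₀ + p (ρ₁ - (b / a) * (ρ₁ - ρ₀)))
        > ((b - a) * m₁₁ + b * ρ₀ * u₀) ^ 2) := by
  have hu2 : 0 < u₀ ^ 2 := by positivity
  -- monotonicity of p
  have hpmono : MonotoneOn p (Set.Ioi 0) := by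
    refine (strictMonoOn_of_deriv_pos (convex_Ioi 0) hp.continuousOn ?_).monotoneOn
    intro x hx
    rw [interior_Ioi] at hx
    exact hp' x hx
  -- Lipschitz bound for p near ρ₀
  obtain ⟨Lp, r, hLp0, hr0, hplip⟩ :
      ∃ Lp r : ℝ, 0 ≤ Lp ∧ 0 < r ∧
        ∀ x ∈ Metric.ball ρ₀ r, ∀ y ∈ Metric.ball ρ₀ r, |p x - p y| ≤ Lp * |x - y| := by
    have hcd : ContDiffAt ℝ 1 p ρ₀ := hp.contDiffAt (isOpen_Ioi.mem_nhds hρ₀)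
    obtain ⟨K, t, ht, hlipK⟩ := hcd.exists_lipschitzOnWith
    obtain ⟨r, hr0, hball⟩ := Metric.mem_nhds_iff.mp ht
    refine ⟨K, r, K.coe_nonneg, hr0, ?_⟩
    intro x hx y hy
    have := (hlipK.mono hball).dist_le_mul x hx y hy
    simpa [Real.dist_eq] using this
  -- Lipschitz bound for P on [ρ₀/2, 2ρ₀]
  obtain ⟨LP, hLP0, hPlip⟩ :
      ∃ LP : ℝ, 0 ≤ LP ∧ ∀ x ∈ Set.Icc (ρ₀ / 2) (2 * ρ₀), ∀ y ∈ Set.Icc (ρ₀ / 2) (2 * ρ₀),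
        |P x - P y| ≤ LP * |x - y| := by
    set mK : ℝ := min (ρ₀ / 2) ρstar with hmKdef
    set MK : ℝ := max (2 * ρ₀) ρstar with hMKdef
    have hmK : 0 < mK := lt_min (by linarith) hρstar
    have hMK : 0 < MK := lt_of_lt_of_le (by linarith) (le_max_left _ _)
    have hIccsub : Set.Icc mK MK ⊆ Set.Ioi 0 := fun x hx => lt_of_lt_of_le hmK hx.1
    have hρstarK : ρstar ∈ Set.Icc mK MK := ⟨min_le_right _ _, le_max_right _ _⟩
    have hfc : ContinuousOn (fun s => p s / s ^ 2) (Set.Icc mK MK) := by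
      refine (hp.continuousOn.mono hIccsub).div ((continuous_pow 2).continuousOn) ?_
      intro x hx
      exact pow_ne_zero _ (ne_of_gt (hIccsub hx))
    obtain ⟨Mf, hMf⟩ := isCompact_Icc.exists_bound_of_continuousOn hfc
    have hMf0 : 0 ≤ Mf := le_trans (norm_nonneg _) (hMf ρstar hρstarK)
    have hInt : ∀ x ∈ Set.Icc mK MK, ∀ y ∈ Set.Icc mK MK,
        IntervalIntegrable (fun s => p s / s ^ 2) MeasureTheory.volume x y := by
      intro x hx y hy
      exact (hfc.mono (uIcc_subset_Icc hx hy)).intervalIntegrable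
    have hIbnd : ∀ x ∈ Set.Icc mK MK, ∀ y ∈ Set.Icc mK MK,
        |∫ s in x..y, p s / s ^ 2| ≤ Mf * |y - x| := by
      intro x hx y hy
      have h := intervalIntegral.norm_integral_le_of_norm_le_const
        (f := fun s => p s / s ^ 2) (C := Mf) (a := x) (b := y) ?_
      · simpa [Real.norm_eq_abs] using h
      · intro s hs
        exact hMf s (uIcc_subset_Icc hx hy (Ioc_subset_Icc_self hs))
    refine ⟨Mf * (MK + ρstar) + 2 * ρ₀ * Mf, ?_, ?_⟩
    · have : 0 ≤ MK + ρstar := by linarith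
      positivity
    intro x hx y hy
    have hxK : x ∈ Set.Icc mK MK := ⟨le_trans (min_le_left _ _) hx.1, le_trans hx.2 (le_max_left _ _)⟩
    have hyK : y ∈ Set.Icc mK MK := ⟨le_trans (min_le_left _ _) hy.1, le_trans hy.2 (le_max_left _ _)⟩
    have hsub : (∫ s in ρstar..x, p s / s ^ 2) - ∫ s in ρstar..y, p s / s ^ 2
        = ∫ s in y..x, p s / s ^ 2 :=
      intervalIntegral.integral_interval_sub_left (hInt ρstar hρstarK x hxK) (hInt ρstar hρstarK y hyK)
    have hkey : P x - P y = (x - y) * (∫ s in ρstar..x, p s / s ^ 2)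
        + y * ((∫ s in ρstar..x, p s / s ^ 2) - ∫ s in ρstar..y, p s / s ^ 2) := by
      rw [hP x, hP y]; ring
    rw [hkey, hsub]
    have h1 : |(x - y) * ∫ s in ρstar..x, p s / s ^ 2| ≤ |x - y| * (Mf * (MK + ρstar)) := by
      rw [abs_mul]
      refine mul_le_mul_of_nonneg_left ?_ (abs_nonneg _)
      have hb := hIbnd ρstar hρstarK x hxK
      have habs : |x - ρstar| ≤ MK + ρstar := by
        rw [abs_le]
        constructor
        · have := hxK.1; linarith
        · have := hxK.2; linarith
      calc |∫ s in ρstar..x, p s / s ^ 2| ≤ Mf * |x - ρstar| := hb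
        _ ≤ Mf * (MK + ρstar) := mul_le_mul_of_nonneg_left habs hMf0
    have h2 : |y * ∫ s in y..x, p s / s ^ 2| ≤ 2 * ρ₀ * (Mf * |x - y|) := by
      rw [abs_mul]
      have hy2 : |y| ≤ 2 * ρ₀ := by
        rw [abs_le]; constructor
        · have := hy.1; linarith
        · exact hy.2
      have hb := hIbnd y hyK x hxK
      calc |y| * |∫ s in y..x, p s / s ^ 2| ≤ 2 * ρ₀ * |∫ s in y..x, p s / s ^ 2| :=
            mul_le_mul_of_nonneg_right hy2 (abs_nonneg _)
        _ ≤ 2 * ρ₀ * (Mf * |x - y|) := mul_le_mul_of_nonneg_left hb (by linarith)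
    calc |(x - y) * (∫ s in ρstar..x, p s / s ^ 2) + y * ∫ s in y..x, p s / s ^ 2|
        ≤ |(x - y) * ∫ s in ρstar..x, p s / s ^ 2| + |y * ∫ s in y..x, p s / s ^ 2| := abs_add_le _ _
      _ ≤ |x - y| * (Mf * (MK + ρstar)) + 2 * ρ₀ * (Mf * |x - y|) := by linarith
      _ = (Mf * (MK + ρstar) + 2 * ρ₀ * Mf) * |x - y| := by ring
  -- choice of b
  obtain ⟨b, hb2, hb1⟩ : ∃ b : ℝ, b ^ 2 = 2 * Lp + 1 ∧ 1 ≤ b := by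
    refine ⟨Real.sqrt (2 * Lp + 1), Real.sq_sqrt (by linarith), ?_⟩
    have hnn := Real.sqrt_nonneg (2 * Lp + 1)
    nlinarith [Real.sq_sqrt (show (0:ℝ) ≤ 2 * Lp + 1 by linarith)]
  have hb0 : 0 < b := by linarith
  have hbnn : 0 ≤ b := hb0.le
  -- choice of δ
  obtain ⟨δ, hδ0, hδhalf, hδρ, hδr, hδC⟩ :
      ∃ δ : ℝ, 0 < δ ∧ δ ≤ 1 / 2 ∧ δ ≤ ρ₀ / 2 ∧ δ ≤ r / 2 ∧
        δ * (4 * (b ^ 2 / 2 + Lp / 2 + 1 + 4 * u₀ ^ 2 * ρ₀ ^ 2 + 2 * LP)) ≤ u₀ ^ 2 * ρ₀ := by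
    have hC0 : 0 < b ^ 2 / 2 + Lp / 2 + 1 + 4 * u₀ ^ 2 * ρ₀ ^ 2 + 2 * LP := by
      have h4 : (0:ℝ) ≤ u₀ ^ 2 * ρ₀ ^ 2 := by positivity
      nlinarith
    refine ⟨min (min (1 / 2) (ρ₀ / 2)) (min (r / 2) (u₀ ^ 2 * ρ₀ / (4 * (b ^ 2 / 2 + Lp / 2 + 1 + 4 * u₀ ^ 2 * ρ₀ ^ 2 + 2 * LP)))),
      lt_min (lt_min one_half_pos (by linarith)) (lt_min (by linarith) (by positivity)),
      le_trans (min_le_left _ _) (min_le_left _ _),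
      le_trans (min_le_left _ _) (min_le_right _ _),
      le_trans (min_le_right _ _) (min_le_left _ _), ?_⟩
    have h : min (min (1 / 2) (ρ₀ / 2)) (min (r / 2) (u₀ ^ 2 * ρ₀ / (4 * (b ^ 2 / 2 + Lp / 2 + 1 + 4 * u₀ ^ 2 * ρ₀ ^ 2 + 2 * LP))))
        ≤ u₀ ^ 2 * ρ₀ / (4 * (b ^ 2 / 2 + Lp / 2 + 1 + 4 * u₀ ^ 2 * ρ₀ ^ 2 + 2 * LP)) :=
      le_trans (min_le_right _ _) (min_le_right _ _)
    rw [le_div_iff₀ (by linarith)] at h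
    linarith
  have hδ2q : δ ^ 2 ≤ 1 / 4 := by nlinarith
  have hδ3 : δ ^ 3 ≤ δ := by nlinarith [mul_le_mul_of_nonneg_left hδ2q hδ0.le]
  have hδ30 : 0 < δ ^ 3 := by positivity
  -- membership facts
  have hr₁I : ρ₀ + δ ^ 3 ∈ Set.Icc (ρ₀ / 2) (2 * ρ₀) := ⟨by linarith, by linarith⟩
  have hr₂I : ρ₀ + δ ^ 3 - δ ∈ Set.Icc (ρ₀ / 2) (2 * ρ₀) := ⟨by linarith, by linarith⟩
  have hρ₀I : ρ₀ ∈ Set.Icc (ρ₀ / 2) (2 * ρ₀) := ⟨by linarith, by linarith⟩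
  have hr₁B : ρ₀ + δ ^ 3 ∈ Metric.ball ρ₀ r := by
    simp only [Metric.mem_ball, Real.dist_eq]
    rw [show ρ₀ + δ ^ 3 - ρ₀ = δ ^ 3 by ring, abs_of_nonneg hδ30.le]
    linarith
  have hr₂B : ρ₀ + δ ^ 3 - δ ∈ Metric.ball ρ₀ r := by
    simp only [Metric.mem_ball, Real.dist_eq]
    rw [show ρ₀ + δ ^ 3 - δ - ρ₀ = -(δ - δ ^ 3) by ring, abs_neg,
      abs_of_nonneg (by linarith : (0:ℝ) ≤ δ - δ ^ 3)]
    linarith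
  have hρ₀B : ρ₀ ∈ Metric.ball ρ₀ r := Metric.mem_ball_self hr0
  -- pointwise bounds on p and P
  have hpaU : p (ρ₀ + δ ^ 3) - p ρ₀ ≤ Lp * δ ^ 3 := by
    have h := hplip _ hr₁B _ hρ₀B
    rw [show ρ₀ + δ ^ 3 - ρ₀ = δ ^ 3 by ring, abs_of_nonneg hδ30.le] at h
    exact le_trans (le_abs_self _) h
  have hpbU : p ρ₀ - p (ρ₀ + δ ^ 3 - δ) ≤ Lp * δ := by
    have h := hplip _ hρ₀B _ hr₂B
    rw [show ρ₀ - (ρ₀ + δ ^ 3 - δ) = δ - δ ^ 3 by ring,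
      abs_of_nonneg (by linarith : (0:ℝ) ≤ δ - δ ^ 3)] at h
    have h2 : Lp * (δ - δ ^ 3) ≤ Lp * δ := by nlinarith
    exact le_trans (le_trans (le_abs_self _) h) h2
  have hPa := abs_le.mp (by
    have h := hPlip _ hρ₀I _ hr₁I
    rwa [show ρ₀ - (ρ₀ + δ ^ 3) = -(δ ^ 3) by ring, abs_neg, abs_of_nonneg hδ30.le] at h :
    |P ρ₀ - P (ρ₀ + δ ^ 3)| ≤ LP * δ ^ 3)
  have hPb := abs_le.mp (by
    have h := hPlip _ hr₁I _ hr₂I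
    rwa [show ρ₀ + δ ^ 3 - (ρ₀ + δ ^ 3 - δ) = δ by ring, abs_of_nonneg hδ0.le] at h :
    |P (ρ₀ + δ ^ 3) - P (ρ₀ + δ ^ 3 - δ)| ≤ LP * δ)
  have hm1 : p ρ₀ ≤ p (ρ₀ + δ ^ 3) :=
    hpmono hρ₀ (by simp only [mem_Ioi]; linarith) (by linarith)
  have hm2 : p (ρ₀ + δ ^ 3 - δ) ≤ p ρ₀ :=
    hpmono (by simp only [mem_Ioi]; linarith) hρ₀ (by linarith)
  have hD : (0:ℝ) < ρ₀ + δ ^ 3 := by linarith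
  have hDne : (ρ₀ + δ ^ 3) ≠ 0 := ne_of_gt hD
  have hδne : δ ≠ 0 := ne_of_gt hδ0
  have hbne : b ≠ 0 := ne_of_gt hb0
  have hb2δ : b ^ 2 * δ ^ 3 = (2 * Lp + 1) * δ ^ 3 := by rw [hb2]
  have hdiv2 : b ^ 2 * (δ ^ 3) ^ 2 / (ρ₀ + δ ^ 3) ≤ b ^ 2 * δ ^ 3 / 2 := by
    rw [div_le_div_iff₀ hD (by norm_num)]
    nlinarith [mul_nonneg (mul_nonneg (sq_nonneg b) hδ30.le) (by linarith : (0:ℝ) ≤ ρ₀ - δ ^ 3)]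
  have he2 : ρ₀ + δ ^ 3 - b / (b * δ ^ 2) * (ρ₀ + δ ^ 3 - ρ₀) = ρ₀ + δ ^ 3 - δ := by
    field_simp
    ring
  have he3 : ρ₀ + δ ^ 3 - ρ₀ = δ ^ 3 := by ring
  -- the witnesses
  refine ⟨b * δ ^ 2, b, ρ₀ + δ ^ 3, -((ρ₀ + δ ^ 3) * u₀),
    ((ρ₀ + δ ^ 3) * u₀ ^ 2 + b ^ 2 * δ ^ 3 + p ρ₀ + p (ρ₀ + δ ^ 3)) / 2 + δ ^ 3,
    (b * (b - b * δ ^ 2) * δ ^ 3 + p ρ₀ + p (ρ₀ + δ ^ 3 - δ)) / 2 + 4 * u₀ ^ 2 * ρ₀ ^ 2 * δ,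
    ?_, ?_, ?_, ?_, ?_, ?_, ?_, ?_, ?_⟩
  · exact mul_pos hb0 (pow_pos hδ0 2)
  · nlinarith
  · linarith
  · rw [he2]; linarith
  · -- (E)
    rw [he2]
    have key : b * δ ^ 2 * ((((ρ₀ + δ ^ 3) * u₀ ^ 2 + b ^ 2 * δ ^ 3 + p ρ₀ + p (ρ₀ + δ ^ 3)) / 2 + δ ^ 3)
          + P (ρ₀ + δ ^ 3) - p (ρ₀ + δ ^ 3)
          - ((b * (b - b * δ ^ 2) * δ ^ 3 + p ρ₀ + p (ρ₀ + δ ^ 3 - δ)) / 2 + 4 * u₀ ^ 2 * ρ₀ ^ 2 * δ)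
          - P (ρ₀ + δ ^ 3 - δ) + p (ρ₀ + δ ^ 3 - δ))
        - b * ((((ρ₀ + δ ^ 3) * u₀ ^ 2 + b ^ 2 * δ ^ 3 + p ρ₀ + p (ρ₀ + δ ^ 3)) / 2 + δ ^ 3)
          + P (ρ₀ + δ ^ 3) - p (ρ₀ + δ ^ 3) - ρ₀ * u₀ ^ 2 / 2 - P ρ₀)
        = u₀ ^ 2 / 2 * b * δ ^ 2 * (ρ₀ + δ ^ 3 - δ)
          - b / 2 * (b ^ 2 - (b * δ ^ 2) ^ 2) * δ ^ 3
          + (b - b * δ ^ 2) * (p (ρ₀ + δ ^ 3) - p ρ₀) / 2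
          - b * δ ^ 2 * (p ρ₀ - p (ρ₀ + δ ^ 3 - δ)) / 2
          - (b - b * δ ^ 2) * δ ^ 3 - 4 * u₀ ^ 2 * ρ₀ ^ 2 * b * δ ^ 3
          + b * (P ρ₀ - P (ρ₀ + δ ^ 3)) + b * δ ^ 2 * (P (ρ₀ + δ ^ 3) - P (ρ₀ + δ ^ 3 - δ)) := by
      ring
    have hbδ2 : (0:ℝ) ≤ b * δ ^ 2 := mul_nonneg hbnn (sq_nonneg δ)
    have h1 : u₀ ^ 2 / 2 * b * δ ^ 2 * (ρ₀ + δ ^ 3 - δ) ≥ u₀ ^ 2 * ρ₀ / 4 * (b * δ ^ 2) := by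
      nlinarith [mul_nonneg (mul_nonneg hu2.le hbδ2) (by linarith : (0:ℝ) ≤ ρ₀ + δ ^ 3 - δ - ρ₀ / 2)]
    have h2 : b / 2 * (b ^ 2 - (b * δ ^ 2) ^ 2) * δ ^ 3 ≤ b ^ 3 / 2 * δ ^ 3 := by
      nlinarith [mul_nonneg (mul_nonneg hbnn (sq_nonneg (b * δ ^ 2))) hδ30.le]
    have h3 : (0:ℝ) ≤ (b - b * δ ^ 2) * (p (ρ₀ + δ ^ 3) - p ρ₀) / 2 := by
      have hba : (0:ℝ) ≤ b - b * δ ^ 2 := by nlinarith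
      have := mul_nonneg hba (by linarith : (0:ℝ) ≤ p (ρ₀ + δ ^ 3) - p ρ₀)
      linarith
    have h4 : b * δ ^ 2 * (p ρ₀ - p (ρ₀ + δ ^ 3 - δ)) ≤ b * Lp * δ ^ 3 := by
      nlinarith [mul_le_mul_of_nonneg_left hpbU hbδ2]
    have h5 : (b - b * δ ^ 2) * δ ^ 3 ≤ b * δ ^ 3 := by
      nlinarith [mul_nonneg hbδ2 hδ30.le]
    have h6 : b * (P ρ₀ - P (ρ₀ + δ ^ 3)) ≥ -(b * (LP * δ ^ 3)) := by
      nlinarith [mul_le_mul_of_nonneg_left hPa.1 hbnn]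
    have h7 : b * δ ^ 2 * (P (ρ₀ + δ ^ 3) - P (ρ₀ + δ ^ 3 - δ)) ≥ -(b * LP * δ ^ 3) := by
      nlinarith [mul_le_mul_of_nonneg_left hPb.1 hbδ2]
    have h8 : (0:ℝ) ≤ b * δ ^ 2 *
        (u₀ ^ 2 * ρ₀ - δ * (4 * (b ^ 2 / 2 + Lp / 2 + 1 + 4 * u₀ ^ 2 * ρ₀ ^ 2 + 2 * LP))) / 4 := by
      have := mul_nonneg hbδ2 (by linarith :
        (0:ℝ) ≤ u₀ ^ 2 * ρ₀ - δ * (4 * (b ^ 2 / 2 + Lp / 2 + 1 + 4 * u₀ ^ 2 * ρ₀ ^ 2 + 2 * LP)))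
      linarith
    linarith [key, h1, h2, h3, h4, h5, h6, h7, h8]
  · -- (T1)
    rw [he3]
    have key : ((-((ρ₀ + δ ^ 3) * u₀)) ^ 2 + b ^ 2 * (δ ^ 3) ^ 2) / (ρ₀ + δ ^ 3)
        = (ρ₀ + δ ^ 3) * u₀ ^ 2 + b ^ 2 * (δ ^ 3) ^ 2 / (ρ₀ + δ ^ 3) := by
      field_simp
    rw [key]
    linarith [hdiv2, hpaU, hb2δ, hδ30]
  · -- (D1)
    rw [he3]
    have hm : (-((ρ₀ + δ ^ 3) * u₀)) ^ 2 / (ρ₀ + δ ^ 3) = (ρ₀ + δ ^ 3) * u₀ ^ 2 := by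
      field_simp
    have hR : -(b * δ ^ 3 * -((ρ₀ + δ ^ 3) * u₀)) / (ρ₀ + δ ^ 3) + b * (ρ₀ * u₀ + -((ρ₀ + δ ^ 3) * u₀)) = 0 := by
      field_simp
      ring
    rw [hm, hR]
    have h0 : (0:ℝ) ^ 2 = 0 := by norm_num
    rw [h0]
    apply mul_pos_of_neg_of_neg
    · linarith
    · linarith [hdiv2, hpaU, hb2δ, hδ30]
  · -- (T2)
    rw [he2]
    nlinarith [mul_pos (mul_pos hb0 (by nlinarith : (0:ℝ) < b - b * δ ^ 2)) hδ30,
      mul_pos (mul_pos hu2 (by positivity : (0:ℝ) < ρ₀ ^ 2)) hδ0]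
  · -- (D2)
    rw [he2, he3]
    have hS : (b - b * δ ^ 2) * -((ρ₀ + δ ^ 3) * u₀) + b * ρ₀ * u₀
        = u₀ * b * δ ^ 2 * (ρ₀ + δ ^ 3 - δ) := by ring
    have hF1 : b * (b - b * δ ^ 2) * δ ^ 3 + p ρ₀ + p (ρ₀ + δ ^ 3 - δ)
        - 2 * ((b * (b - b * δ ^ 2) * δ ^ 3 + p ρ₀ + p (ρ₀ + δ ^ 3 - δ)) / 2 + 4 * u₀ ^ 2 * ρ₀ ^ 2 * δ)
        = -(8 * u₀ ^ 2 * ρ₀ ^ 2 * δ) := by ring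
    rw [hS, hF1]
    have hF2 : -(b * (b - b * δ ^ 2) * δ ^ 3) - p ρ₀ + p (ρ₀ + δ ^ 3 - δ)
        ≤ -(3 / 4 * (b ^ 2 * δ ^ 3)) := by
      nlinarith [mul_nonneg (mul_nonneg (sq_nonneg b) hδ30.le) (by linarith : (0:ℝ) ≤ 1 / 4 - δ ^ 2)]
    have hneg : -(8 * u₀ ^ 2 * ρ₀ ^ 2 * δ) ≤ 0 := neg_nonpos.mpr (by positivity)
    have h6' := mul_le_mul_of_nonpos_left hF2 hneg
    have hpos : 0 < u₀ ^ 2 * b ^ 2 * δ ^ 4 :=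
      mul_pos (mul_pos hu2 (pow_pos hb0 2)) (pow_pos hδ0 4)
    have hq : (ρ₀ + δ ^ 3 - δ) ^ 2 ≤ ρ₀ ^ 2 := by nlinarith
    have h7 : (u₀ * b * δ ^ 2 * (ρ₀ + δ ^ 3 - δ)) ^ 2 ≤ u₀ ^ 2 * b ^ 2 * δ ^ 4 * ρ₀ ^ 2 := by
      nlinarith [mul_le_mul_of_nonneg_left hq hpos.le]
    have h8 : 0 < u₀ ^ 2 * b ^ 2 * δ ^ 4 * ρ₀ ^ 2 :=
      mul_pos hpos (pow_pos hρ₀ 2)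
    nlinarith [h6', h7, h8]
end

section
/- (Verification of the entropy condition.) Let p : ℝ → ℝ be continuously differentiable on (0,∞) with p(ρ) > 0 and p'(ρ) > 0 for all ρ > 0, let P(ρ) = ρ ∫_{ρ*}^{ρ} p(r)/r² dr for some fixed ρ* > 0, let ρ₀ > 0, u₀ ≠ 0, and set b := √(p'(ρ₀) + 1). Let ε ∈ (0, ρ₀) satisfy ε(u₀² + 2P'(ρ₀) + 3) + 2P(ρ₀ − ε) − p(ρ₀ − ε) − 2P(ρ₀) + p(ρ₀) < ½ρ₀u₀², and let a ∈ (0, b) satisfy, with δ := aε/(b − a), (2P(ρ₀ + δ) − 2P(ρ₀))/δ − (p(ρ₀ + δ) − p(ρ₀))/δ < 2P'(ρ₀) − p'(ρ₀) + 1. Define ρ₁ := ρ₀ + aε/(b − a), ρ₂ := ρ₀ − ε, q₁ := ½(ρ₁u₀² + (ρ₁ − ρ₀)(b² + 1) + p(ρ₀) + p(ρ₁)), and q₂ := ½(p(ρ₀) + p(ρ₀ − ε) + ½ρ₀u₀²). Then b(q₁ + P(ρ₁) − p(ρ₁) − ½ρ₀u₀² − P(ρ₀)) < a(q₁ + P(ρ₁)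 − p(ρ₁) − q₂ − P(ρ₂) + p(ρ₂)). -/
/-- **Verification of the entropy condition** (proof of Lemma 3.5).
With `b := √(p'(ρ₀) + 1)`, an `ε ∈ (0, ρ₀)` satisfying the smallness condition,
an `a ∈ (0, b)` satisfying (a1), and the explicit choices
`ρ₁ := ρ₀ + aε/(b-a)`, `ρ₂ := ρ₀ - ε`,
`q₁ := ½(ρ₁u₀² + (ρ₁-ρ₀)(b²+1) + p(ρ₀) + p(ρ₁))`,
`q₂ := ½(p(ρ₀) + p(ρ₀-ε) + ½ρ₀u₀²)`,
the reduced entropy condition holds with strict inequality. -/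
theorem entropy_condition_verified
    (p : ℝ → ℝ) (hp : ContDiffOn ℝ 1 p (Set.Ioi 0))
    (hppos : ∀ ρ : ℝ, 0 < ρ → 0 < p ρ) (hp' : ∀ ρ : ℝ, 0 < ρ → 0 < deriv p ρ)
    (ρstar : ℝ) (hρstar : 0 < ρstar)
    (P : ℝ → ℝ) (hP : ∀ ρ : ℝ, P ρ = ρ * ∫ r in ρstar..ρ, p r / r ^ 2)
    (ρ₀ u₀ : ℝ) (hρ₀ : 0 < ρ₀) (hu₀ : u₀ ≠ 0)
    (b : ℝ) (hb : b = Real.sqrt (deriv p ρ₀ + 1))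
    (ε : ℝ) (hε : 0 < ε) (hερ₀ : ε < ρ₀)
    (hεsmall : ε * (u₀ ^ 2 + 2 * deriv P ρ₀ + 3) + 2 * P (ρ₀ - ε) - p (ρ₀ - ε)
        - 2 * P ρ₀ + p ρ₀ < ρ₀ * u₀ ^ 2 / 2)
    (a : ℝ) (ha : 0 < a) (hab : a < b)
    (ha1 : (2 * P (ρ₀ + a * ε / (b - a)) - 2 * P ρ₀) / (a * ε / (b - a))
          - (p (ρ₀ + a * ε / (b - a)) - p ρ₀) / (a * ε / (b - a))
        < 2 * deriv P ρ₀ - deriv p ρ₀ + 1)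
    (ρ₁ : ℝ) (hρ₁ : ρ₁ = ρ₀ + a * ε / (b - a))
    (ρ₂ : ℝ) (hρ₂ : ρ₂ = ρ₀ - ε)
    (q₁ : ℝ) (hq₁ : q₁ = (ρ₁ * u₀ ^ 2 + (ρ₁ - ρ₀) * (b ^ 2 + 1) + p ρ₀ + p ρ₁) / 2)
    (q₂ : ℝ) (hq₂ : q₂ = (p ρ₀ + p (ρ₀ - ε) + ρ₀ * u₀ ^ 2 / 2) / 2) :
    b * (q₁ + P ρ₁ - p ρ₁ - ρ₀ * u₀ ^ 2 / 2 - P ρ₀)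
      < a * (q₁ + P ρ₁ - p ρ₁ - q₂ - P ρ₂ + p ρ₂) := by
  have hba : 0 < b - a := sub_pos.mpr hab
  set d : ℝ := a * ε / (b - a) with hd
  have hdpos : 0 < d := by positivity
  have hbd : (b - a) * d = a * ε := by
    rw [hd]; field_simp [hba.ne']
  have hb2 : b ^ 2 = deriv p ρ₀ + 1 := by
    rw [hb, Real.sq_sqrt]
    linarith [hp' ρ₀ hρ₀]
  have h1 : 2 * P ρ₁ - 2 * P ρ₀ - (p ρ₁ - p ρ₀)
      < d * (2 * deriv P ρ₀ - deriv p ρ₀ + 1) := by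
    have := ha1
    rw [div_sub_div_same] at this
    rw [div_lt_iff₀ hdpos] at this
    rw [hρ₁]
    linarith
  have h1' : (b - a) * (2 * P ρ₁ - 2 * P ρ₀ - (p ρ₁ - p ρ₀))
      < a * ε * (2 * deriv P ρ₀ - deriv p ρ₀ + 1) := by
    calc (b - a) * (2 * P ρ₁ - 2 * P ρ₀ - (p ρ₁ - p ρ₀))
        < (b - a) * (d * (2 * deriv P ρ₀ - deriv p ρ₀ + 1)) := by
          exact (mul_lt_mul_iff_right₀ hba).mpr h1
      _ = a * ε * (2 * deriv P ρ₀ - deriv p ρ₀ + 1) := by rw [← mul_assoc, hbd]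
  have h2 : a * (ε * (u₀ ^ 2 + 2 * deriv P ρ₀ + 3) + 2 * P (ρ₀ - ε) - p (ρ₀ - ε)
      - 2 * P ρ₀ + p ρ₀) < a * (ρ₀ * u₀ ^ 2 / 2) :=
    (mul_lt_mul_iff_right₀ ha).mpr hεsmall
  have hρ₁d : ρ₁ - ρ₀ = d := by rw [hρ₁]; ring
  have e1 : (b - a) * d * u₀ ^ 2 = a * ε * u₀ ^ 2 := by rw [hbd]
  have e2 : (b - a) * d * deriv p ρ₀ = a * ε * deriv p ρ₀ := by rw [hbd]
  rw [hq₁, hq₂, hρ₂, hb2, hρ₁]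
  rw [hρ₁] at h1'
  linarith [h1', h2, hbd, e1, e2]
end

section
/- (Verification of the subsolution conditions in the outer intermediate regions.) Let p : ℝ → ℝ be continuously differentiable on (0,∞) with p(ρ) > 0 and p'(ρ) > 0 for all ρ > 0, let ρ₀ > 0, u₀ ≠ 0, set b := √(p'(ρ₀) + 1), fix ε ∈ (0, ρ₀), and let a ∈ (0, b) satisfy, with δ := aε/(b − a), ((p(ρ₀ + δ) − p(ρ₀))/δ) · (1 + δ/ρ₀) < p'(ρ₀) + 1. Define ρ₁ := ρ₀ + aε/(b − a) and q₁ := ½(ρ₁u₀² + (ρ₁ − ρ₀)(b² + 1) + p(ρ₀) + p(ρ₁)). Then: (i) ρ₁u₀² + b²(ρ₁ − ρ₀) + p(ρ₀) + p(ρ₁) − 2q₁ < 0; (ii) −b²(ρ₁ − ρ₀)(ρ₀/ρ₁) − p(ρ₀) + p(ρ₁) < 0; and consequently (iii) ρ₁u₀² + b²(ρ₁ − ρ₀)²/ρ₁ + 2(p(ρ₁) − q₁) < 0 and (iv) (ρ₁u₀² + b²(ρ₁ − ρ₀) + p(ρ₀) + p(ρ₁) − 2q₁) · (−b²(ρ₁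 − ρ₀)(ρ₀/ρ₁) − p(ρ₀) + p(ρ₁)) > 0. -/
/-- **Verification of the subsolution conditions in the outer intermediate regions**
(proof of Lemma 3.5). With `b := √(p'(ρ₀) + 1)`, `ε ∈ (0, ρ₀)`, and `a ∈ (0, b)`
satisfying (a2), for `ρ₁ := ρ₀ + aε/(b-a)` and
`q₁ := ½(ρ₁u₀² + (ρ₁-ρ₀)(b²+1) + p(ρ₀) + p(ρ₁))`, both factors on the left-hand side of
the determinant subsolution condition are negative ((i) and (ii)), and consequently the
trace condition (iii) and the determinant condition (iv) hold. -/
theorem outer_subsolution_conditions_verified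
    (p : ℝ → ℝ) (hp : ContDiffOn ℝ 1 p (Set.Ioi 0))
    (hppos : ∀ ρ : ℝ, 0 < ρ → 0 < p ρ) (hp' : ∀ ρ : ℝ, 0 < ρ → 0 < deriv p ρ)
    (ρ₀ u₀ : ℝ) (hρ₀ : 0 < ρ₀) (hu₀ : u₀ ≠ 0)
    (b : ℝ) (hb : b = Real.sqrt (deriv p ρ₀ + 1))
    (ε : ℝ) (hε : 0 < ε) (hερ₀ : ε < ρ₀)
    (a : ℝ) (ha : 0 < a) (hab : a < b)
    (ha2 : ((p (ρ₀ + a * ε / (b - a)) - p ρ₀) / (a * ε / (b - a)))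
          * (1 + (a * ε / (b - a)) / ρ₀)
        < deriv p ρ₀ + 1)
    (ρ₁ : ℝ) (hρ₁ : ρ₁ = ρ₀ + a * ε / (b - a))
    (q₁ : ℝ) (hq₁ : q₁ = (ρ₁ * u₀ ^ 2 + (ρ₁ - ρ₀) * (b ^ 2 + 1) + p ρ₀ + p ρ₁) / 2) :
    -- (i)
    (ρ₁ * u₀ ^ 2 + b ^ 2 * (ρ₁ - ρ₀) + p ρ₀ + p ρ₁ - 2 * q₁ < 0) ∧
    -- (ii)
    (-(b ^ 2 * (ρ₁ - ρ₀)) * (ρ₀ / ρ₁) - p ρ₀ + p ρ₁ < 0) ∧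
    -- (iii)
    (ρ₁ * u₀ ^ 2 + b ^ 2 * (ρ₁ - ρ₀) ^ 2 / ρ₁ + 2 * (p ρ₁ - q₁) < 0) ∧
    -- (iv)
    ((ρ₁ * u₀ ^ 2 + b ^ 2 * (ρ₁ - ρ₀) + p ρ₀ + p ρ₁ - 2 * q₁)
        * (-(b ^ 2 * (ρ₁ - ρ₀)) * (ρ₀ / ρ₁) - p ρ₀ + p ρ₁) > 0) := by
  have hbpos : 0 < b := lt_trans ha hab
  have hba : 0 < b - a := sub_pos.mpr hab
  have hδ : 0 < a * ε / (b - a) := by positivity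
  set δ := a * ε / (b - a) with hδdef
  have hρ₁pos : 0 < ρ₁ := by rw [hρ₁]; positivity
  have hb2 : b ^ 2 = deriv p ρ₀ + 1 := by
    rw [hb, sq, Real.mul_self_sqrt (by linarith [hp' ρ₀ hρ₀])]
  -- (i)
  have hi : ρ₁ * u₀ ^ 2 + b ^ 2 * (ρ₁ - ρ₀) + p ρ₀ + p ρ₁ - 2 * q₁ = -δ := by
    rw [hq₁, hρ₁]; ring
  have h1 : ρ₁ * u₀ ^ 2 + b ^ 2 * (ρ₁ - ρ₀) + p ρ₀ + p ρ₁ - 2 * q₁ < 0 := by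
    rw [hi]; linarith
  -- (ii)
  have ha2' : (p ρ₁ - p ρ₀) * ρ₁ < b ^ 2 * δ * ρ₀ := by
    rw [hb2, hρ₁]
    have h := ha2
    rw [div_mul_eq_mul_div, div_lt_iff₀ hδ] at h
    have hfac : 1 + δ / ρ₀ = (ρ₀ + δ) / ρ₀ := by field_simp
    rw [hfac] at h
    calc (p (ρ₀ + δ) - p ρ₀) * (ρ₀ + δ)
        = ((p (ρ₀ + δ) - p ρ₀) * ((ρ₀ + δ) / ρ₀)) * ρ₀ := by field_simp
      _ < ((deriv p ρ₀ + 1) * δ) * ρ₀ := by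
          exact mul_lt_mul_of_pos_right h hρ₀
      _ = (deriv p ρ₀ + 1) * δ * ρ₀ := by ring
  have h2 : -(b ^ 2 * (ρ₁ - ρ₀)) * (ρ₀ / ρ₁) - p ρ₀ + p ρ₁ < 0 := by
    rw [show -(b ^ 2 * (ρ₁ - ρ₀)) * (ρ₀ / ρ₁) - p ρ₀ + p ρ₁
        = ((p ρ₁ - p ρ₀) * ρ₁ - b ^ 2 * (ρ₁ - ρ₀) * ρ₀) / ρ₁ by field_simp; ring]
    apply div_neg_of_neg_of_pos _ hρ₁pos
    have : ρ₁ - ρ₀ = δ := by rw [hρ₁]; ring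
    rw [this]; linarith
  -- (iii)
  have h3 : ρ₁ * u₀ ^ 2 + b ^ 2 * (ρ₁ - ρ₀) ^ 2 / ρ₁ + 2 * (p ρ₁ - q₁) < 0 := by
    have hsum : ρ₁ * u₀ ^ 2 + b ^ 2 * (ρ₁ - ρ₀) ^ 2 / ρ₁ + 2 * (p ρ₁ - q₁)
        = (ρ₁ * u₀ ^ 2 + b ^ 2 * (ρ₁ - ρ₀) + p ρ₀ + p ρ₁ - 2 * q₁)
          + (-(b ^ 2 * (ρ₁ - ρ₀)) * (ρ₀ / ρ₁) - p ρ₀ + p ρ₁) := by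
      field_simp; ring
    rw [hsum]; linarith
  exact ⟨h1, h2, h3, mul_pos_of_neg_of_neg h1 h2⟩
end

section
/- (Nonexistence of admissible fan subsolutions with a three-region partition.) Let ρ₀ > 0, u₀ ≠ 0, and let p(ρ₀) ∈ ℝ. Then there do NOT exist real numbers μ₀ < μ₁, a density ρ₁ > 0, a momentum m₁ ∈ ℝ², real numbers U₁₁, U₁₂ (the entries of a symmetric traceless matrix 𝕌₁), and q₁ ∈ ℝ satisfying simultaneously: the Rankine–Hugoniot conditions across y = μ₀t with left state (ρ₀, (−ρ₀u₀, 0), diag(½ρ₀u₀², −½ρ₀u₀²), ½ρ₀u₀² + p(ρ₀)): μ₀(ρ₀ − ρ₁) = −[m₁]₂, μ₀(−ρ₀u₀ − [m₁]₁) = −U₁₂, μ₀(0 − [m₁]₂) = p(ρ₀) + U₁₁ − q₁; the Rankine–Hugoniot conditions across y = μ₁t with right state (ρ₀, (ρ₀u₀, 0), diag(½ρ₀u₀², −½ρ₀u₀²), ½ρ₀u₀² + p(ρ₀)): μ₁(ρ₁ − ρ₀) = [m₁]₂, μ₁([m₁]₁ − ρ₀u₀) = U₁₂, μ₁([m₁]₂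 − 0) = −U₁₁ + q₁ − p(ρ₀); and the subsolution conditions: ([m₁]₁² + [m₁]₂²)/ρ₁ + 2(p(ρ₁) − q₁) < 0 and ([m₁]₁²/ρ₁ − U₁₁ + p(ρ₁) − q₁)([m₁]₂²/ρ₁ + U₁₁ + p(ρ₁) − q₁) − ([m₁]₁[m₁]₂/ρ₁ − U₁₂)² > 0. -/
/-- **Nonexistence of admissible fan subsolutions with a three-region partition**
(Remark 3.6). For the symmetric contact-discontinuity Riemann data `ρ± = ρ₀`,
`m± = (±ρ₀u₀, 0)`, there is no fan partition of `(0,∞)×ℝ²` into three regions with a single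
intermediate state `(ρ₁, m₁, 𝕌₁, q₁)` (the symmetric traceless matrix `𝕌₁` being recorded
by its entries `U₁₁ = [𝕌₁]₁₁, U₁₂ = [𝕌₁]₁₂`) satisfying the Rankine–Hugoniot conditions
across the two interfaces `y = μ₀ t` and `y = μ₁ t` together with the subsolution
conditions. -/
theorem no_three_region_fan_subsolution
    (p : ℝ → ℝ) (ρ₀ u₀ : ℝ) (hρ₀ : 0 < ρ₀) (hu₀ : u₀ ≠ 0) :
    ¬ ∃ (μ₀ μ₁ : ℝ) (ρ₁ : ℝ) (m₁ : ℝ × ℝ) (U₁₁ U₁₂ q₁ : ℝ),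
      μ₀ < μ₁ ∧ 0 < ρ₁ ∧
      -- Rankine–Hugoniot conditions across y = μ₀ t (left state
      -- (ρ₀, (-ρ₀u₀, 0), diag(½ρ₀u₀², -½ρ₀u₀²), ½ρ₀u₀² + p(ρ₀)))
      (μ₀ * (ρ₀ - ρ₁) = 0 - m₁.2) ∧
      (μ₀ * (-(ρ₀ * u₀) - m₁.1) = 0 - U₁₂) ∧
      (μ₀ * (0 - m₁.2) = p ρ₀ + U₁₁ - q₁) ∧
      -- Rankine–Hugoniot conditions across y = μ₁ t (right state
      -- (ρ₀, (ρ₀u₀, 0), diag(½ρ₀u₀², -½ρ₀u₀²), ½ρ₀u₀² + p(ρ₀)))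
      (μ₁ * (ρ₁ - ρ₀) = m₁.2 - 0) ∧
      (μ₁ * (m₁.1 - ρ₀ * u₀) = U₁₂ - 0) ∧
      (μ₁ * (m₁.2 - 0) = -U₁₁ + q₁ - p ρ₀) ∧
      -- subsolution conditions
      ((m₁.1 ^ 2 + m₁.2 ^ 2) / ρ₁ + 2 * (p ρ₁ - q₁) < 0) ∧
      ((m₁.1 ^ 2 / ρ₁ - U₁₁ + p ρ₁ - q₁) * (m₁.2 ^ 2 / ρ₁ + U₁₁ + p ρ₁ - q₁)
          - (m₁.1 * m₁.2 / ρ₁ - U₁₂) ^ 2 > 0) := by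
  rintro ⟨μ₀, μ₁, ρ₁, m₁, U₁₁, U₁₂, q₁, hμ, hρ₁, h1, h2, h3, h4, h5, h6, h7, h8⟩
  have hρeq : ρ₁ = ρ₀ := by
    have : (μ₁ - μ₀) * (ρ₁ - ρ₀) = 0 := by nlinarith [h1, h4]
    rcases mul_eq_zero.mp this with h | h
    · linarith
    · linarith
  subst hρeq
  have hm2 : m₁.2 = 0 := by nlinarith [h4, hμ]
  have hU : U₁₁ + p ρ₁ - q₁ = 0 := by rw [hm2] at h3; linarith
  rw [hm2] at h8
  have : (m₁.1 ^ 2 / ρ₁ - U₁₁ + p ρ₁ - q₁) * (0 ^ 2 / ρ₁ + U₁₁ + p ρ₁ - q₁) = 0 := by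
    have : (0:ℝ) ^ 2 / ρ₁ + U₁₁ + p ρ₁ - q₁ = 0 := by
      simp; linarith
    rw [this, mul_zero]
  nlinarith [sq_nonneg (m₁.1 * 0 / ρ₁ - U₁₂)]
end
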